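/- Let A be a directed-complete generalized ultrametric semilattice with distance set P, let F : A → A be contracting, let a be a post-fixed point of F, and let g be a function from ordinals to A such that g(0) = a, g(α+1) = F(g(α)) ⊓ F(F(g(α))) for every ordinal α, and for every limit ordinal λ, g(λ) is a least upper bound of {g(β) : β < λ} in (A, ⊑). If, for an ordinal α, g(α) ≠ F(g(α)) ⊓ F(F(g(α))), then for all ordinals β < γ < α + 2 one has g(β) ⊑ g(γ) and g(β) ≠ g(γ); in particular, β ↦ g(β) is a strictly order-preserving map from the ordinals below α + 2 into (A, ⊑). -/

import Mathlib

/-- A generalized ultrametric semilattice over a meet-semilattice `A`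
(with induced order `a ⊑ b ↔ a ⊓ b = a`, i.e. the `≤` of `SemilatticeInf`)
and a pointed partially ordered distance set `P` with least element `⊥`. -/
structure GUSemilattice (A : Type*) (P : Type*) [SemilatticeInf A] [PartialOrder P] [OrderBot P] where
  d : A → A → P
  d_eq_bot_iff : ∀ a₁ a₂ : A, d a₁ a₂ = ⊥ ↔ a₁ = a₂
  d_symm : ∀ a₁ a₂ : A, d a₁ a₂ = d a₂ a₁
  d_ultra : ∀ (a₁ a₂ a₃ : A) (p : P), d a₁ a₂ ≤ p → d a₂ a₃ ≤ p → d a₁ a₃ ≤ p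
  inf_le_inf_of_d_le : ∀ a₁ a₂ a₃ : A, d a₁ a₂ ≤ d a₁ a₃ → a₁ ⊓ a₃ ≤ a₁ ⊓ a₂
  d_inf_inf_le : ∀ a₁ a₂ a₃ : A, d (a₁ ⊓ a₂) (a₁ ⊓ a₃) ≤ d a₂ a₃

variable {A P : Type*} [SemilatticeInf A] [PartialOrder P] [OrderBot P]

/-- `F` is contracting. -/
def GUSemilattice.Contracting (S : GUSemilattice A P) (F : A → A) : Prop :=
  ∀ a₁ a₂ : A, S.d (F a₁) (F a₂) ≤ S.d a₁ a₂

/-- `F` is strictly contracting. -/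
def GUSemilattice.StrictlyContracting (S : GUSemilattice A P) (F : A → A) : Prop :=
  ∀ a₁ a₂ : A, a₁ ≠ a₂ → S.d (F a₁) (F a₂) < S.d a₁ a₂

/-- `F` is strictly contracting on orbits. -/
def GUSemilattice.StrictlyContractingOnOrbits (S : GUSemilattice A P) (F : A → A) : Prop :=
  ∀ a : A, a ≠ F a → S.d (F a) (F (F a)) < S.d a (F a)

/-- A ball in the generalized ultrametric space associated with `S`. -/
def GUSemilattice.IsBall (S : GUSemilattice A P) (B : Set A) : Prop :=
  ∃ (a : A) (p : P), B = {x : A | S.d x a ≤ p}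

/-- Spherical completeness: every nonempty chain of balls has nonempty intersection. -/
def GUSemilattice.SphericallyComplete (S : GUSemilattice A P) : Prop :=
  ∀ C : Set (Set A), C.Nonempty → IsChain (· ⊆ ·) C → (∀ B ∈ C, S.IsBall B) → (⋂₀ C).Nonempty

/-- Directed-completeness: every nonempty directed subset has a least upper bound. -/
def DirectedComplete (A : Type*) [Preorder A] : Prop :=
  ∀ D : Set A, D.Nonempty → DirectedOn (· ≤ ·) D → ∃ s : A, IsLUB D s

section Aux

variable (S : GUSemilattice A P)

/-- If `x ≤ y ≤ z` then `d x y ≤ d x z`. -/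
private lemma GUS_d_mono_right {x y z : A} (hxy : x ≤ y) (hyz : y ≤ z) :
    S.d x y ≤ S.d x z := by
  have h := S.d_inf_inf_le y x z
  rwa [inf_eq_right.mpr hxy, inf_eq_left.mpr hyz] at h

/-- If `x ≤ y ≤ z` then `d y z ≤ d x z`. -/
private lemma GUS_d_mono_left {x y z : A} (hxy : x ≤ y) (hyz : y ≤ z) :
    S.d y z ≤ S.d x z := by
  refine S.d_ultra y x z _ ?_ le_rfl
  rw [S.d_symm]
  exact GUS_d_mono_right S hxy hyz

/-- A post-fixed point of `F` is also a post-fixed point of `F ∘ F`. -/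
private lemma GUS_le_F_sq {F : A → A} (hF : S.Contracting F) {x : A} (hx : x ≤ F x) :
    x ≤ F (F x) := by
  have h2 : S.d x (F (F x)) ≤ S.d x (F x) :=
    S.d_ultra x (F x) (F (F x)) _ le_rfl (hF x (F x))
  have h3 := S.inf_le_inf_of_d_le x (F (F x)) (F x) h2
  rw [inf_eq_left.mpr hx] at h3
  exact h3.trans inf_le_right

/-- The successor step preserves post-fixedness. -/
private lemma GUS_succ_postfix {F : A → A} (hF : S.Contracting F) {x : A} (hx : x ≤ F x) :
    F x ⊓ F (F x) ≤ F (F x ⊓ F (F x)) := by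
  have h1 : S.d (F x) (F x ⊓ F (F x)) ≤ S.d (F x) (F (F x)) := by
    have h := S.d_inf_inf_le (F x) (F x) (F (F x))
    rwa [inf_idem] at h
  have h2 : S.d (F (F x)) (F (F x ⊓ F (F x))) ≤ S.d (F x) (F (F x)) :=
    (hF (F x) (F x ⊓ F (F x))).trans h1
  have h3 : S.d (F x) (F (F x ⊓ F (F x))) ≤ S.d (F x) (F (F x)) :=
    S.d_ultra (F x) (F (F x)) _ _ le_rfl h2
  have h4 := S.inf_le_inf_of_d_le (F x) (F (F x ⊓ F (F x))) (F (F x)) h3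
  exact h4.trans inf_le_right

/-- The limit step preserves post-fixedness. -/
private lemma GUS_limit_postfix {F : A → A} (hF : S.Contracting F) {g : Ordinal → A} {l : Ordinal}
    (hlub : IsLUB (g '' Set.Iio l) (g l))
    (ih : ∀ β < l, g β ≤ F (g β)) : g l ≤ F (g l) := by
  have key : ∀ β < l, g β ≤ g l ⊓ F (g l) := by
    intro β hβ
    have hβs : g β ≤ g l := hlub.1 ⟨β, hβ, rfl⟩
    have hpf : g β ≤ F (g β) := ih β hβ
    have hgm : g β ≤ g l ⊓ F (g β) := le_inf hβs hpf
    have hms : g l ⊓ F (g β) ≤ g l := inf_le_left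
    have s1 : S.d (g l) (g l ⊓ F (g β)) ≤ S.d (g β) (g l) := by
      rw [S.d_symm]
      exact GUS_d_mono_left S hgm hms
    have s2 : S.d (g l ⊓ F (g β)) (g l ⊓ F (g l)) ≤ S.d (g β) (g l) :=
      (S.d_inf_inf_le (g l) (F (g β)) (F (g l))).trans (hF (g β) (g l))
    have s3 : S.d (g l) (g l ⊓ F (g l)) ≤ S.d (g β) (g l) :=
      S.d_ultra (g l) (g l ⊓ F (g β)) (g l ⊓ F (g l)) _ s1 s2
    have s4 : S.d (g l) (g l ⊓ F (g l)) ≤ S.d (g l) (g β) := by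
      rw [S.d_symm (g l) (g β)]
      exact s3
    have s5 := S.inf_le_inf_of_d_le (g l) (g l ⊓ F (g l)) (g β) s4
    rwa [inf_eq_right.mpr hβs, inf_left_idem] at s5
  have hub : F (g l) ∈ upperBounds (g '' Set.Iio l) := by
    rintro y ⟨β, hβ, rfl⟩
    exact (key β hβ).trans inf_le_right
  exact hlub.2 hub

end Aux

theorem transfinite_iteration_strictMono_below_of_not_stuttering
    (S : GUSemilattice A P) (hdc : DirectedComplete A)
    (F : A → A) (hF : S.Contracting F)
    (a : A) (ha : a ≤ F a)
    (g : Ordinal → A)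
    (hg0 : g 0 = a)
    (hgsucc : ∀ α : Ordinal, g (α + 1) = F (g α) ⊓ F (F (g α)))
    (hglim : ∀ l : Ordinal, Order.IsSuccLimit l → IsLUB (g '' Set.Iio l) (g l))
    (α : Ordinal) (hα : g α ≠ F (g α) ⊓ F (F (g α))) :
    ∀ β γ : Ordinal, β < γ → γ < α + 2 → g β ≤ g γ ∧ g β ≠ g γ := by
  -- Step 1: every iterate is a post-fixed point of `F`.
  have hpf : ∀ γ : Ordinal, g γ ≤ F (g γ) := by
    intro γ
    induction γ using Ordinal.induction with
    | _ γ ih =>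
      rcases Ordinal.zero_or_succ_or_isSuccLimit γ with h0 | ⟨δ, hδ⟩ | hlim
      · rw [h0, hg0]; exact ha
      · have hδlt : δ < γ := by rw [← hδ]; exact Order.lt_succ δ
        rw [← hδ, ← Ordinal.add_one_eq_succ δ, hgsucc]
        exact GUS_succ_postfix S hF (ih δ hδlt)
      · exact GUS_limit_postfix S hF (hglim γ hlim) (fun β hβ => ih β hβ)
  -- Step 2: `g` is monotone.
  have hmono : ∀ γ β : Ordinal, β ≤ γ → g β ≤ g γ := by
    intro γ
    induction γ using Ordinal.induction with
    | _ γ ih =>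
      intro β hβ
      rcases eq_or_lt_of_le hβ with rfl | hlt
      · exact le_rfl
      rcases Ordinal.zero_or_succ_or_isSuccLimit γ with h0 | ⟨δ, hδ⟩ | hlim
      · exact absurd hlt (by rw [h0]; exact (zero_le (a := β)).not_gt)
      · have hδlt : δ < γ := by rw [← hδ]; exact Order.lt_succ δ
        have hβδ : β ≤ δ := by
          rw [← hδ] at hlt
          exact Order.lt_succ_iff.mp hlt
        have h1 : g β ≤ g δ := ih δ hδlt β hβδ
        have h2 : g δ ≤ g (δ + 1) := by
          rw [hgsucc]
          exact le_inf (hpf δ) (GUS_le_F_sq S hF (hpf δ))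
        rw [← hδ, ← Ordinal.add_one_eq_succ δ]
        exact h1.trans h2
      · exact (hglim γ hlim).1 ⟨β, hlt, rfl⟩
  -- Step 3: once the iteration stutters, it is constant.
  have hconst : ∀ β : Ordinal, g β = g (β + 1) → ∀ γ : Ordinal, β ≤ γ → g γ = g β := by
    intro β hst γ
    induction γ using Ordinal.induction with
    | _ γ ih =>
      intro hβγ
      rcases eq_or_lt_of_le hβγ with rfl | hlt
      · rfl
      rcases Ordinal.zero_or_succ_or_isSuccLimit γ with h0 | ⟨δ, hδ⟩ | hlim
      · exact absurd hlt (by rw [h0]; exact (zero_le (a := β)).not_gt)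
      · have hδlt : δ < γ := by rw [← hδ]; exact Order.lt_succ δ
        have hβδ : β ≤ δ := by
          rw [← hδ] at hlt
          exact Order.lt_succ_iff.mp hlt
        have hδe : g δ = g β := ih δ hδlt hβδ
        rw [← hδ, ← Ordinal.add_one_eq_succ δ, hgsucc, hδe, ← hgsucc, ← hst]
      · have hlub := hglim γ hlim
        have hub : g β ∈ upperBounds (g '' Set.Iio γ) := by
          rintro y ⟨δ, hδmem, rfl⟩
          rcases le_total δ β with h | h
          · exact hmono β δ h
          · exact (ih δ hδmem h).le
        exact le_antisymm (hlub.2 hub) (hlub.1 ⟨β, hlt, rfl⟩)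
  -- Main argument.
  intro β γ hβγ hγ
  refine ⟨hmono γ β hβγ.le, ?_⟩
  intro heq
  have hββ1 : β ≤ β + 1 := by
    rw [Ordinal.add_one_eq_succ β]
    exact (Order.lt_succ β).le
  have hβ1γ : β + 1 ≤ γ := by
    rw [Ordinal.add_one_eq_succ β]
    exact Order.succ_le_of_lt hβγ
  have hst : g β = g (β + 1) :=
    le_antisymm (hmono (β + 1) β hββ1) ((hmono γ (β + 1) hβ1γ).trans heq.ge)
  have h22 : α + 2 = α + 1 + 1 := by rw [add_assoc, one_add_one_eq_two]
  have hγα1 : γ ≤ α + 1 := by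
    rw [h22, Ordinal.add_one_eq_succ (α + 1)] at hγ
    exact Order.lt_succ_iff.mp hγ
  have hβα : β ≤ α := by
    have hβα1 : β < α + 1 := lt_of_lt_of_le hβγ hγα1
    rw [Ordinal.add_one_eq_succ α] at hβα1
    exact Order.lt_succ_iff.mp hβα1
  have h1 : g α = g β := hconst β hst α hβα
  have h2 : g (α + 1) = g β := by
    refine hconst β hst (α + 1) (hβα.trans ?_)
    rw [Ordinal.add_one_eq_succ α]
    exact (Order.lt_succ α).le
  exact hα (by rw [← hgsucc α, h1, h2])
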